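/- For an odd prime p, the polynomial x^p - x + p = p·g_p(x) is irreducible over ℚ. -/

import Mathlib

open Polynomial

private lemma root_bound (p : ℕ) (hp3 : 3 ≤ p) (z : ℂ)
    (hz : z ^ p - z + (p : ℂ) = 0) : 1 < ‖z‖ := by
  by_contra h
  push_neg at h
  have h1 : (p : ℂ) = z - z ^ p := by linear_combination hz
  have h2 : (p : ℝ) ≤ 2 := by
    calc (p : ℝ) = ‖z - z ^ p‖ := by rw [← h1]; simp
    _ ≤ ‖z‖ + ‖z ^ p‖ := by
        rw [sub_eq_add_neg]
        refine (norm_add_le _ _).trans ?_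
        rw [norm_neg]
    _ ≤ 1 + 1 := by
        gcongr
        rw [norm_pow]
        exact pow_le_one₀ (norm_nonneg z) h
    _ = 2 := by norm_num
  have h3 : (3 : ℝ) ≤ (p : ℝ) := by exact_mod_cast hp3
  linarith

private lemma one_le_multiset_prod (s : Multiset ℝ) (h : ∀ x ∈ s, (1:ℝ) ≤ x) :
    1 ≤ s.prod := by
  induction s using Multiset.induction with
  | empty => simp
  | cons a s ih =>
    rw [Multiset.prod_cons]
    have ha := h a (Multiset.mem_cons_self a s)
    have hs := ih (fun x hx => h x (Multiset.mem_cons_of_mem hx))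
    nlinarith

private lemma const_coeff_big (p : ℕ) (hp3 : 3 ≤ p) (g : ℤ[X]) (hg : g.Monic)
    (hdvd : g ∣ (X ^ p - X + C (p : ℤ))) (hdeg : 0 < g.natDegree) :
    2 ≤ (g.coeff 0).natAbs := by
  set gc : ℂ[X] := g.map (algebraMap ℤ ℂ) with hgc_def
  have hgc : gc.Monic := hg.map _
  have hsplit : Splits gc := IsAlgClosed.splits gc
  have heq : gc = (gc.roots.map fun a => X - C a).prod :=
    hsplit.eq_prod_roots_of_monic hgc
  have hcard : gc.roots.card = g.natDegree := by
    rw [splits_iff_card_roots.mp hsplit, hg.natDegree_map]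
  -- every root has abs > 1
  have hroots : ∀ a ∈ gc.roots, 1 < ‖a‖ := by
    intro a ha
    obtain ⟨q, hq⟩ := hdvd
    have haroot : gc.eval a = 0 := (mem_roots'.mp ha).2
    have hfa : a ^ p - a + (p : ℂ) = 0 := by
      have : ((X ^ p - X + C (p : ℤ) : ℤ[X]).map (algebraMap ℤ ℂ)).eval a = 0 := by
        rw [hq, Polynomial.map_mul, eval_mul, ← hgc_def, haroot, zero_mul]
      simpa using this
    exact root_bound p hp3 a hfa
  -- constant coefficient
  have h0 : ((g.coeff 0 : ℤ) : ℂ) = (gc.roots.map fun a => -a).prod := by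
    have : gc.coeff 0 = gc.eval 0 := (coeff_zero_eq_eval_zero gc).trans rfl
    rw [show ((g.coeff 0 : ℤ) : ℂ) = gc.coeff 0 by simp [hgc_def], this]
    conv_lhs => rw [heq]
    rw [eval_multiset_prod, Multiset.map_map]
    congr 1
    apply Multiset.map_congr rfl
    intro a _
    simp
  have habs : ‖((g.coeff 0 : ℤ) : ℂ)‖ = (gc.roots.map (fun x => ‖x‖)).prod := by
    rw [h0, show ‖(Multiset.map (fun a => -a) gc.roots).prod‖ = _ from map_multiset_prod (normHom : ℂ →*₀ ℝ) _, Multiset.map_map]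
    congr 1
    apply Multiset.map_congr rfl
    intro a _
    exact norm_neg a
  obtain ⟨a, ha⟩ := Multiset.card_pos_iff_exists_mem.mp (by rw [hcard]; exact hdeg)
  obtain ⟨t, ht⟩ := Multiset.exists_cons_of_mem ha
  have hone : 1 < (gc.roots.map (fun x => ‖x‖)).prod := by
    rw [ht, Multiset.map_cons, Multiset.prod_cons]
    have h1 : 1 < ‖a‖ := hroots a ha
    have h2 : (1:ℝ) ≤ (t.map (fun x => ‖x‖)).prod := by
      apply one_le_multiset_prod
      intro x hx
      obtain ⟨b, hb, rfl⟩ := Multiset.mem_map.mp hx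
      exact (hroots b (by rw [ht]; exact Multiset.mem_cons_of_mem hb)).le
    nlinarith
  rw [← habs] at hone
  rw [Complex.norm_intCast, ← Int.cast_abs] at hone
  have h1 : (1:ℤ) < |g.coeff 0| := by exact_mod_cast hone
  rw [Int.abs_eq_natAbs] at h1
  omega

private lemma key_lemma (p : ℕ) (hp : p.Prime) (hp3 : 3 ≤ p) (a b : ℤ[X])
    (ha : a.Monic) (hb : b.Monic) (hab : (X ^ p - X + C (p : ℤ)) = a * b) :
    a.natDegree = 0 ∨ b.natDegree = 0 := by
  by_contra h
  push_neg at h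
  obtain ⟨ha0, hb0⟩ := h
  have hA := const_coeff_big p hp3 a ha ⟨b, hab⟩ (Nat.pos_of_ne_zero ha0)
  have hB := const_coeff_big p hp3 b hb ⟨a, by rw [hab, mul_comm]⟩ (Nat.pos_of_ne_zero hb0)
  have hc : a.coeff 0 * b.coeff 0 = (p : ℤ) := by
    have h := congrArg (fun q : ℤ[X] => q.coeff 0) hab
    simp only [coeff_add, coeff_sub, coeff_X_pow, coeff_X_zero, coeff_C_zero,
      mul_coeff_zero] at h
    rw [if_neg (by omega : ¬ (0:ℕ) = p)] at h
    omega
  have hnat : (a.coeff 0).natAbs * (b.coeff 0).natAbs = p := by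
    rw [← Int.natAbs_mul, hc, Int.natAbs_natCast]
  rcases hp.eq_one_or_self_of_dvd (a.coeff 0).natAbs ⟨(b.coeff 0).natAbs, hnat.symm⟩ with h1 | h1
  · omega
  · rw [h1] at hnat
    have hppos : 0 < p := by omega
    nlinarith

theorem irreducible_xp_sub_x_add_p (p : ℕ) (hp : p.Prime) (hodd : Odd p) :
    Irreducible (X ^ p - X + C (p : ℚ)) := by
  have hp3 : 3 ≤ p := by
    have h2 := hp.two_le
    rcases Nat.lt_or_ge p 3 with h | h
    · interval_cases p
      · exact absurd hodd (by decide)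
    · exact h
  set f : ℤ[X] := X ^ p - X + C (p : ℤ) with hf
  have hfmonic : f.Monic := by
    rw [hf]
    monicity!
    rw [if_pos (by omega : 1 ≤ p), if_neg (by omega : ¬ p ≤ 1)]
    rfl
  have hmap : (X ^ p - X + C (p : ℚ)) = f.map (algebraMap ℤ ℚ) := by
    simp [hf, Polynomial.map_add, Polynomial.map_sub, Polynomial.map_pow, map_C]
  rw [hmap]
  rw [← hfmonic.irreducible_iff_irreducible_map_fraction_map]
  constructor
  · intro hu
    have h0 := natDegree_eq_zero_of_isUnit hu
    have hdeg : f.natDegree = p := by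
      rw [hf]
      compute_degree!
      · rw [if_neg (by omega : ¬ (1:ℕ) = p), if_neg (by omega : ¬ p = 0)]
        decide
      · omega
    omega
  · intro a b hab
    have hlc : a.leadingCoeff * b.leadingCoeff = 1 := by
      rw [← leadingCoeff_mul, ← hab, hfmonic]
    rcases Int.eq_one_or_neg_one_of_mul_eq_one' hlc with ⟨h1, h2⟩ | ⟨h1, h2⟩
    · have := key_lemma p hp hp3 a b h1 h2 hab
      rcases this with h | h
      · left; rw [(Monic.natDegree_eq_zero h1).mp h]; exact isUnit_one
      · right; rw [(Monic.natDegree_eq_zero h2).mp h]; exact isUnit_one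
    · have hma : (-a).Monic := by rw [Monic, leadingCoeff_neg, h1]; ring
      have hmb : (-b).Monic := by rw [Monic, leadingCoeff_neg, h2]; ring
      have := key_lemma p hp hp3 (-a) (-b) hma hmb (by rw [neg_mul_neg]; exact hab)
      rcases this with h | h
      · left
        have := (Monic.natDegree_eq_zero hma).mp h
        rw [show a = -(-a) by ring, this]
        exact (isUnit_one.neg)
      · right
        have := (Monic.natDegree_eq_zero hmb).mp h
        rw [show b = -(-b) by ring, this]
        exact (isUnit_one.neg)
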